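/- For the Boolean matroid B_n, the faces of the augmented Bergman fan (cones σ_{I≤𝓕} indexed by compatible pairs of an independent set I ⊆ [n] and a chain 𝓕 of proper subsets of [n] with I ⊆ min(𝓕)) are in inclusion-preserving bijection with the faces of the reduced nested set complex of the Boolean lattice on [n] ∪ {*} with respect to the graphical building set B(K_{1,n}). -/

import Mathlib

open Finset

/-- the star graph `K_{1,n}` on vertex set `[n] ∪ {*}`, with `*` encoded as `none` -/
def starGraph (n : ℕ) : SimpleGraph (Option (Fin n)) :=
  SimpleGraph.fromRel fun a _ => a = none

/-- the graphical building set of a graph: nonempty vertex subsets inducing a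
connected subgraph -/
def graphBuilding {V : Type*} (G : SimpleGraph V) : Set (Finset V) :=
  {I : Finset V | I.Nonempty ∧ (SimpleGraph.induce (↑I : Set V) G).Connected}

/-- `N` is nested with respect to the graphical building set of `G`: for any
pairwise incomparable elements `G₁, …, G_t ∈ N` with `t ≥ 2`, their join (union)
is not in the building set. -/
def GNested {V : Type*} (G : SimpleGraph V) (N : Set (Finset V)) : Prop :=
  ∀ s ⊆ N, s.Finite → 2 ≤ s.ncard →
    (∀ I ∈ s, ∀ J ∈ s, I ≠ J → ¬ I ⊆ J ∧ ¬ J ⊆ I) →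
    ∀ t : Finset V, (↑t = ⋃ I ∈ s, (I : Set V)) → t ∉ graphBuilding G

/-- faces of the augmented Bergman fan of the Boolean matroid `B_n`:
compatible pairs `I ≤ 𝓕` of a subset `I ⊆ [n]` and a chain `𝓕` of proper
subsets of `[n]` with `I` contained in every member of `𝓕`. -/
def AugFace (n : ℕ) :=
  {p : Finset (Fin n) × Set (Finset (Fin n)) //
    IsChain (· ⊆ ·) p.2 ∧ (∀ F ∈ p.2, F ≠ Finset.univ) ∧ ∀ F ∈ p.2, p.1 ⊆ F}

/-- faces of the reduced nested set complex of the Boolean lattice on `[n] ∪ {*}`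
with respect to the graphical building set of the star graph `K_{1,n}`:
nested sets not containing the maximal element `[n] ∪ {*}`. -/
def RedNestedFace (n : ℕ) :=
  {N : Set (Finset (Option (Fin n))) //
    N ⊆ graphBuilding (starGraph n) ∧ GNested (starGraph n) N ∧ Finset.univ ∉ N}

namespace Aux15

variable {n : ℕ}

lemma star_adj {a b : Option (Fin n)} :
    (starGraph n).Adj a b ↔ a ≠ b ∧ (a = none ∨ b = none) := by
  simp [starGraph, SimpleGraph.fromRel_adj]

/-- lift a subset of `[n]` to a subset of `[n] ∪ {*}` by adding `*`. -/
def lift (F : Finset (Fin n)) : Finset (Option (Fin n)) := insert none (F.image some)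

@[simp] lemma none_mem_lift (F : Finset (Fin n)) : none ∈ lift F := mem_insert_self _ _

@[simp] lemma some_mem_lift {i : Fin n} {F : Finset (Fin n)} :
    some i ∈ lift F ↔ i ∈ F := by
  simp [lift]

lemma lift_subset_lift {F G : Finset (Fin n)} : lift F ⊆ lift G ↔ F ⊆ G := by
  constructor
  · intro h i hi
    have := h (some_mem_lift.2 hi)
    exact some_mem_lift.1 this
  · intro h a ha
    match a with
    | none => exact none_mem_lift _
    | some i => exact some_mem_lift.2 (h (some_mem_lift.1 ha))

lemma lift_inj {F G : Finset (Fin n)} (h : lift F = lift G) : F = G :=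
  subset_antisymm (lift_subset_lift.1 h.le) (lift_subset_lift.1 h.ge)

lemma lift_ne_singleton {F : Finset (Fin n)} {i : Fin n} : lift F ≠ {some i} := by
  intro h
  have := none_mem_lift F
  rw [h, mem_singleton] at this
  exact (Option.some_ne_none i).symm this

lemma lift_eq_univ_iff {F : Finset (Fin n)} : lift F = Finset.univ ↔ F = Finset.univ := by
  constructor
  · intro h
    ext i
    simp only [mem_univ, iff_true]
    have : some i ∈ lift F := h ▸ mem_univ _
    exact some_mem_lift.1 this
  · intro h
    ext a
    simp only [mem_univ, iff_true]
    match a with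
    | none => exact none_mem_lift _
    | some i => exact some_mem_lift.2 (h ▸ mem_univ i)

/-- a singleton is in the building set -/
lemma singleton_mem_building (a : Option (Fin n)) :
    ({a} : Finset (Option (Fin n))) ∈ graphBuilding (starGraph n) := by
  refine ⟨singleton_nonempty a, ?_⟩
  haveI : Nonempty (↑(↑({a} : Finset (Option (Fin n))) : Set (Option (Fin n)))) :=
    ⟨⟨a, by simp⟩⟩
  refine ⟨?_⟩
  intro x y
  have hx : (x : Option (Fin n)) = a := by simpa using x.2
  have hy : (y : Option (Fin n)) = a := by simpa using y.2
  have : x = y := Subtype.ext (hx.trans hy.symm)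
  exact this ▸ SimpleGraph.Reachable.refl x

lemma lift_mem_building (F : Finset (Fin n)) :
    lift F ∈ graphBuilding (starGraph n) := by
  have hnone : (none : Option (Fin n)) ∈ lift F := none_mem_lift F
  refine ⟨⟨none, hnone⟩, ?_⟩
  haveI : Nonempty (↑(↑(lift F) : Set (Option (Fin n)))) := ⟨⟨none, by exact_mod_cast hnone⟩⟩
  refine ⟨?_⟩
  have key : ∀ x : (↑(lift F) : Set (Option (Fin n))),
      (SimpleGraph.induce (↑(lift F) : Set (Option (Fin n))) (starGraph n)).Reachable
        x ⟨none, by exact_mod_cast hnone⟩ := by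
    intro x
    rcases hx : (x : Option (Fin n)) with _ | i
    · have : x = ⟨none, by exact_mod_cast hnone⟩ := Subtype.ext hx
      rw [this]
    · refine SimpleGraph.Adj.reachable ?_
      show (starGraph n).Adj (x : Option (Fin n)) none
      rw [star_adj, hx]
      exact ⟨Option.some_ne_none i, Or.inr rfl⟩
  exact fun x y => (key x).trans (key y).symm

/-- members of the building set either are a singleton `{some i}` or contain `none`. -/
lemma mem_building_iff {t : Finset (Option (Fin n))} :
    t ∈ graphBuilding (starGraph n) ↔ (∃ i, t = {some i}) ∨ none ∈ t := by
  constructor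
  · rintro ⟨hne, hconn⟩
    by_cases hn : (none : Option (Fin n)) ∈ t
    · exact Or.inr hn
    · left
      have hbot : SimpleGraph.induce (↑t : Set (Option (Fin n))) (starGraph n) = ⊥ := by
        ext x y
        simp only [SimpleGraph.comap_adj, SimpleGraph.bot_adj, iff_false]
        intro hadj
        rw [star_adj] at hadj
        rcases hadj.2 with h1 | h1
        · exact hn (by rw [← h1]; exact_mod_cast x.2)
        · exact hn (by rw [← h1]; exact_mod_cast y.2)
      have hsub : ∀ x y : (↑t : Set (Option (Fin n))), x = y := by
        intro x y
        have h := hconn.preconnected x y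
        rw [hbot, SimpleGraph.reachable_bot] at h
        exact h
      obtain ⟨a, ha⟩ := hne
      rcases ha' : a with _ | i
      · exact absurd (ha' ▸ ha) hn
      refine ⟨i, ?_⟩
      ext b
      simp only [mem_singleton]
      constructor
      · intro hb
        have := hsub ⟨b, by exact_mod_cast hb⟩ ⟨a, by exact_mod_cast ha⟩
        have hba : b = a := congrArg Subtype.val this
        rw [hba, ha']
      · rintro rfl
        rw [← ha']; exact ha
  · rintro (⟨i, rfl⟩ | hn)
    · exact singleton_mem_building _
    · have : t = lift (Finset.univ.filter fun i => some i ∈ t) := by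
        ext a
        match a with
        | none => simpa using hn
        | some i => simp
      rw [this]
      exact lift_mem_building _

/-- the nested set associated to an augmented Bergman face -/
def toN (I : Finset (Fin n)) (𝓕 : Set (Finset (Fin n))) : Set (Finset (Option (Fin n))) :=
  (fun i => ({some i} : Finset (Option (Fin n)))) '' ↑I ∪ lift '' 𝓕

lemma mem_toN {I : Finset (Fin n)} {𝓕 : Set (Finset (Fin n))}
    {X : Finset (Option (Fin n))} :
    X ∈ toN I 𝓕 ↔ (∃ i ∈ I, X = {some i}) ∨ ∃ F ∈ 𝓕, X = lift F := by
  simp only [toN, Set.mem_union, Set.mem_image, Finset.mem_coe]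
  constructor
  · rintro (⟨i, hi, rfl⟩ | ⟨F, hF, rfl⟩)
    · exact Or.inl ⟨i, hi, rfl⟩
    · exact Or.inr ⟨F, hF, rfl⟩
  · rintro (⟨i, hi, rfl⟩ | ⟨F, hF, rfl⟩)
    · exact Or.inl ⟨i, hi, rfl⟩
    · exact Or.inr ⟨F, hF, rfl⟩

lemma singleton_mem_toN {I : Finset (Fin n)} {𝓕 : Set (Finset (Fin n))} {i : Fin n} :
    ({some i} : Finset (Option (Fin n))) ∈ toN I 𝓕 ↔ i ∈ I := by
  rw [mem_toN]
  constructor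
  · rintro (⟨j, hj, h⟩ | ⟨F, hF, h⟩)
    · have : some i = some j := by
        have := mem_singleton.1 (h ▸ mem_singleton_self (some i))
        exact this
      cases Option.some_injective _ this
      exact hj
    · exact absurd h.symm lift_ne_singleton
  · intro h; exact Or.inl ⟨i, h, rfl⟩

lemma lift_mem_toN {I : Finset (Fin n)} {𝓕 : Set (Finset (Fin n))} {F : Finset (Fin n)} :
    lift F ∈ toN I 𝓕 ↔ F ∈ 𝓕 := by
  rw [mem_toN]
  constructor
  · rintro (⟨j, hj, h⟩ | ⟨F', hF', h⟩)
    · exact absurd h lift_ne_singleton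
    · cases lift_inj h; exact hF'
  · intro h; exact Or.inr ⟨F, h, rfl⟩

lemma toN_props (p : AugFace n) :
    toN p.1.1 p.1.2 ⊆ graphBuilding (starGraph n) ∧
      GNested (starGraph n) (toN p.1.1 p.1.2) ∧ Finset.univ ∉ toN p.1.1 p.1.2 := by
  obtain ⟨⟨I, 𝓕⟩, hchain, hproper, hsub⟩ := p
  refine ⟨?_, ?_, ?_⟩
  · intro X hX
    rcases mem_toN.1 hX with ⟨i, _, rfl⟩ | ⟨F, _, rfl⟩
    · exact singleton_mem_building _
    · exact lift_mem_building _
  · intro s hsN hsfin hs2 hinc t ht htb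
    rcases mem_building_iff.1 htb with ⟨i, rfl⟩ | hnone
    · -- t is a singleton; every member of s is a nonempty subset of it
      have : ∀ X ∈ s, X = ({some i} : Finset (Option (Fin n))) := by
        intro X hX
        have hXsub : (X : Set (Option (Fin n))) ⊆ (↑({some i} : Finset (Option (Fin n))) :
            Set (Option (Fin n))) := by
          rw [ht]; exact Set.subset_biUnion_of_mem hX
        have hXsub' : X ⊆ ({some i} : Finset (Option (Fin n))) := by
          intro a ha; exact_mod_cast hXsub (by exact_mod_cast ha)
        have hXne : X.Nonempty := by
          rcases mem_toN.1 (hsN hX) with ⟨j, _, rfl⟩ | ⟨F, _, rfl⟩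
          · exact singleton_nonempty _
          · exact ⟨none, none_mem_lift _⟩
        exact subset_antisymm hXsub' (singleton_subset_iff.2
          (by obtain ⟨a, ha⟩ := hXne; have := hXsub' ha; rw [mem_singleton] at this;
              exact this ▸ ha))
      have h1s : 1 < s.ncard := by omega
      obtain ⟨a, ha, b, hb, hab⟩ := (Set.one_lt_ncard hsfin).1 h1s
      exact hab ((this a ha).trans (this b hb).symm)
    · -- t contains none; some member of s contains none, hence is a lift
      have : ∃ X ∈ s, (none : Option (Fin n)) ∈ X := by
        have : (none : Option (Fin n)) ∈ (↑t : Set (Option (Fin n))) := by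
          exact_mod_cast hnone
        rw [ht] at this
        simpa using this
      obtain ⟨X, hXs, hXnone⟩ := this
      have hXlift : ∃ F ∈ 𝓕, X = lift F := by
        rcases mem_toN.1 (hsN hXs) with ⟨j, _, rfl⟩ | h
        · exact absurd (mem_singleton.1 hXnone) (fun h => (Option.some_ne_none j).symm h)
        · exact h
      obtain ⟨F, hF𝓕, rfl⟩ := hXlift
      have h1s : 1 < s.ncard := by omega
      obtain ⟨Y, hYs, hYX⟩ := Set.exists_ne_of_one_lt_ncard h1s (lift F)
      have hic := hinc Y hYs (lift F) hXs hYX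
      rcases mem_toN.1 (hsN hYs) with ⟨j, hjI, rfl⟩ | ⟨F', hF', rfl⟩
      · exact hic.1 (singleton_subset_iff.2 (some_mem_lift.2 (hsub F hF𝓕 hjI)))
      · rcases hchain.total hF' hF𝓕 with h | h
        · exact hic.1 (lift_subset_lift.2 h)
        · exact hic.2 (lift_subset_lift.2 h)
  · intro h
    rcases mem_toN.1 h with ⟨i, _, hi⟩ | ⟨F, hF, hFu⟩
    · have : (none : Option (Fin n)) ∈ ({some i} : Finset (Option (Fin n))) :=
        hi ▸ mem_univ _
      exact (Option.some_ne_none i).symm (mem_singleton.1 this)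
    · exact hproper F hF (lift_eq_univ_iff.1 hFu.symm)

/-- forward map -/
def fwd (p : AugFace n) : RedNestedFace n := ⟨toN p.1.1 p.1.2, toN_props p⟩

/-- backward map: the underlying pair -/
noncomputable def bwdPair (N : Set (Finset (Option (Fin n)))) :
    Finset (Fin n) × Set (Finset (Fin n)) :=
  (@Finset.filter _ (fun i => ({some i} : Finset (Option (Fin n))) ∈ N)
      (Classical.decPred _) Finset.univ,
    {F | lift F ∈ N})

lemma mem_bwdPair_fst {N : Set (Finset (Option (Fin n)))} {i : Fin n} :
    i ∈ (bwdPair N).1 ↔ ({some i} : Finset (Option (Fin n))) ∈ N := by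
  unfold bwdPair
  exact (@Finset.mem_filter _ _ (Classical.decPred _) Finset.univ i).trans
    (by simp)

lemma two_antichain_not_nested {N : Set (Finset (Option (Fin n)))}
    (hN : GNested (starGraph n) N) {X Y : Finset (Option (Fin n))}
    (hX : X ∈ N) (hY : Y ∈ N) (hXY : X ≠ Y) (h1 : ¬ X ⊆ Y) (h2 : ¬ Y ⊆ X)
    (hb : X ∪ Y ∈ graphBuilding (starGraph n)) : False := by
  refine hN {X, Y} ?_ ((Set.finite_singleton _).insert _) ?_ ?_ (X ∪ Y) ?_ hb
  · intro Z hZ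
    rcases hZ with rfl | hZ
    · exact hX
    · rw [Set.mem_singleton_iff] at hZ; exact hZ ▸ hY
  · rw [Set.ncard_pair hXY]
  · intro A hA B hB hAB
    rcases hA with rfl | hA <;> rcases hB with rfl | hB
    · exact absurd rfl hAB
    · rw [Set.mem_singleton_iff] at hB; subst hB; exact ⟨h1, h2⟩
    · rw [Set.mem_singleton_iff] at hA; subst hA; exact ⟨h2, h1⟩
    · rw [Set.mem_singleton_iff] at hA hB; subst hA; subst hB; exact absurd rfl hAB
  · rw [Set.biUnion_pair]
    push_cast
    rfl

lemma bwd_props (N : RedNestedFace n) :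
    IsChain (· ⊆ ·) (bwdPair N.1).2 ∧ (∀ F ∈ (bwdPair N.1).2, F ≠ Finset.univ) ∧
      ∀ F ∈ (bwdPair N.1).2, (bwdPair N.1).1 ⊆ F := by
  obtain ⟨N, hNb, hNn, hNu⟩ := N
  refine ⟨?_, ?_, ?_⟩
  · intro F hF F' hF' hne
    by_contra hcon
    push_neg at hcon
    apply two_antichain_not_nested hNn hF hF'
      (fun h => hne (lift_inj h))
      (fun h => hcon.1 (lift_subset_lift.1 h))
      (fun h => hcon.2 (lift_subset_lift.1 h))
    exact mem_building_iff.2 (Or.inr (mem_union_left _ (none_mem_lift F)))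
  · intro F hF hFu
    subst hFu
    exact hNu (lift_eq_univ_iff.2 rfl ▸ hF)
  · intro F hF i hi
    rw [mem_bwdPair_fst] at hi
    by_contra hiF
    apply two_antichain_not_nested hNn hi hF (Ne.symm lift_ne_singleton)
      (fun h => hiF (some_mem_lift.1 (h (mem_singleton_self _))))
      (fun h => (Option.some_ne_none i).symm (mem_singleton.1 (h (none_mem_lift F))))
    exact mem_building_iff.2 (Or.inr (mem_union_right _ (none_mem_lift F)))

noncomputable def bwd (N : RedNestedFace n) : AugFace n := ⟨bwdPair N.1, bwd_props N⟩

lemma left_inv (p : AugFace n) : bwd (fwd p) = p := by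
  obtain ⟨⟨I, 𝓕⟩, hp⟩ := p
  apply Subtype.ext
  show bwdPair (toN I 𝓕) = (I, 𝓕)
  refine Prod.ext ?_ ?_
  · ext i
    rw [mem_bwdPair_fst]
    exact singleton_mem_toN
  · ext F
    exact lift_mem_toN

lemma right_inv (N : RedNestedFace n) : fwd (bwd N) = N := by
  obtain ⟨N, hNb, hNn, hNu⟩ := N
  apply Subtype.ext
  show toN (bwdPair N).1 (bwdPair N).2 = N
  ext X
  rw [mem_toN]
  constructor
  · rintro (⟨i, hi, rfl⟩ | ⟨F, hF, rfl⟩)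
    · exact mem_bwdPair_fst.1 hi
    · exact hF
  · intro hX
    rcases mem_building_iff.1 (hNb hX) with ⟨i, rfl⟩ | hnone
    · exact Or.inl ⟨i, mem_bwdPair_fst.2 hX, rfl⟩
    · right
      refine ⟨Finset.univ.filter fun i => some i ∈ X, ?_, ?_⟩
      · show lift _ ∈ N
        have : lift (Finset.univ.filter fun i => some i ∈ X) = X := by
          ext a
          match a with
          | none => simpa using hnone
          | some i => simp
        rw [this]; exact hX
      · ext a
        match a with
        | none => simpa using hnone
        | some i => simp

end Aux15

theorem stmt15 (n : ℕ) :
    ∃ e : AugFace n ≃ RedNestedFace n,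
      ∀ u v : AugFace n,
        (u.1.1 ⊆ v.1.1 ∧ u.1.2 ⊆ v.1.2) ↔ (e u).1 ⊆ (e v).1 := by
  refine ⟨⟨Aux15.fwd, Aux15.bwd, Aux15.left_inv, Aux15.right_inv⟩, ?_⟩
  intro u v
  show _ ↔ Aux15.toN u.1.1 u.1.2 ⊆ Aux15.toN v.1.1 v.1.2
  constructor
  · rintro ⟨hI, h𝓕⟩ X hX
    rcases Aux15.mem_toN.1 hX with ⟨i, hi, rfl⟩ | ⟨F, hF, rfl⟩
    · exact Aux15.mem_toN.2 (Or.inl ⟨i, hI hi, rfl⟩)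
    · exact Aux15.mem_toN.2 (Or.inr ⟨F, h𝓕 hF, rfl⟩)
  · intro h
    constructor
    · intro i hi
      exact Aux15.singleton_mem_toN.1 (h (Aux15.singleton_mem_toN.2 hi))
    · intro F hF
      exact Aux15.lift_mem_toN.1 (h (Aux15.lift_mem_toN.2 hF))
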